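/- Consider the polar unicycle under the nonovershooting feedback with gains k₁,k₂,k₃,k₄ > 0. Along every closed-loop solution (ρ,δ,γ) on an interval I with ρ(t) > 0 and |δ(t)| < π for all t ∈ I, the function V_{δγ}(t) = 4 tan²(δ(t)/2) + q² z(t)² is differentiable and satisfies dV_{δγ}/dt(t) ≤ −(6k₁k₂/N(δ(t))) (1 + tan²(δ(t)/2)) tan²(δ(t)/2) − 2k₄ q² z(t)² for all t ∈ I. -/

import Mathlib

/-!
STATEMENT 17: Nonovershooting feedback for the polar unicycle: along every
closed-loop solution with ρ > 0 and |δ| < π, the function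
V_{δγ} = 4 tan²(δ/2) + q² z² is differentiable and its derivative satisfies
dV_{δγ}/dt ≤ −(6k₁k₂/N(δ))(1 + tan²(δ/2)) tan²(δ/2) − 2k₄ q² z².
-/
noncomputable section

open Real

/-- backstepping variable z = γ + (1/2) arctan(4k₂ tan(δ/2)) -/
def zN (k₂ δ γ : ℝ) : ℝ := γ + (1 / 2) * Real.arctan (4 * k₂ * Real.tan (δ / 2))

/-- N(δ) = √(1 + 16k₂² tan²(δ/2)) -/
def NN (k₂ δ : ℝ) : ℝ := Real.sqrt (1 + 16 * k₂ ^ 2 * Real.tan (δ / 2) ^ 2)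

/-- ψ(z,γ) = (sin(2z−2γ) + sin(2γ))/(2z) for z ≠ 0, ψ(0,γ) = cos(2γ) -/
def psiN (z γ : ℝ) : ℝ :=
  if z = 0 then Real.cos (2 * γ)
  else (Real.sin (2 * z - 2 * γ) + Real.sin (2 * γ)) / (2 * z)

/-- nonovershooting forward velocity v = k₁ ρ cos γ -/
def vN (k₁ ρ γ : ℝ) : ℝ := k₁ * ρ * Real.cos γ

/-- ω̃ of the nonovershooting feedback -/
def omTildeN (k₁ k₂ k₃ k₄ δ γ : ℝ) : ℝ :=
  (k₄ + (k₃ / k₂) * psiN (zN k₂ δ γ) γ ^ 2 * NN k₂ δ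
      * (1 + Real.tan (δ / 2) ^ 2)) * zN k₂ δ γ
    + (k₁ * k₂ / 2) * Real.sin (2 * γ)
        / (Real.cos (δ / 2) ^ 2 + 16 * k₂ ^ 2 * Real.sin (δ / 2) ^ 2)

/-- nonovershooting angular velocity ω = (k₁/2) sin(2γ) + ω̃ -/
def omN (k₁ k₂ k₃ k₄ δ γ : ℝ) : ℝ :=
  (k₁ / 2) * Real.sin (2 * γ) + omTildeN k₁ k₂ k₃ k₄ δ γ

theorem nonovershooting_Lyapunov_derivative_bound
    (k₁ k₂ k₃ k₄ : ℝ) (hk₁ : 0 < k₁) (hk₂ : 0 < k₂) (hk₃ : 0 < k₃) (hk₄ : 0 < k₄)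
    (I : Set ℝ) (ρ δ γ : ℝ → ℝ)
    (hρpos : ∀ t ∈ I, 0 < ρ t)
    (hδπ : ∀ t ∈ I, |δ t| < Real.pi)
    (hρ : ∀ t ∈ I,
      HasDerivAt ρ (-(vN k₁ (ρ t) (γ t)) * Real.cos (γ t)) t)
    (hδ : ∀ t ∈ I,
      HasDerivAt δ ((vN k₁ (ρ t) (γ t) / ρ t) * Real.sin (γ t)) t)
    (hγ : ∀ t ∈ I,
      HasDerivAt γ ((vN k₁ (ρ t) (γ t) / ρ t) * Real.sin (γ t)
        - omN k₁ k₂ k₃ k₄ (δ t) (γ t)) t) :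
    ∀ t ∈ I, ∃ D : ℝ,
      HasDerivAt
        (fun s => 4 * Real.tan (δ s / 2) ^ 2
          + Real.sqrt (k₁ / k₃) ^ 2 * zN k₂ (δ s) (γ s) ^ 2) D t
      ∧ D ≤ -(6 * k₁ * k₂ / NN k₂ (δ t)) * (1 + Real.tan (δ t / 2) ^ 2)
              * Real.tan (δ t / 2) ^ 2
            - 2 * k₄ * Real.sqrt (k₁ / k₃) ^ 2 * zN k₂ (δ t) (γ t) ^ 2 := by

  intro t ht
  have hρt : ρ t ≠ 0 := (hρpos t ht).ne'
  have hδt := abs_lt.mp (hδπ t ht)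
  set g := γ t with hg
  set c := Real.cos (δ t / 2) with hcdef
  set T := Real.tan (δ t / 2) with hTdef
  set z := zN k₂ (δ t) g with hzdef
  set N := NN k₂ (δ t) with hNdef
  set ψ := psiN z g with hψdef
  have hcpos : 0 < c := by
    rw [hcdef]
    exact Real.cos_pos_of_mem_Ioo ⟨by linarith [hδt.1], by linarith [hδt.2]⟩
  have hcne : c ≠ 0 := hcpos.ne'
  have h1T : 0 < 1 + T ^ 2 := by positivity
  have hsc : Real.sin (δ t / 2) ^ 2 + c ^ 2 = 1 := by
    rw [hcdef]; exact Real.sin_sq_add_cos_sq (δ t / 2)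
  have hc2 : c ^ 2 * (1 + T ^ 2) = 1 := by
    rw [hTdef, Real.tan_eq_sin_div_cos, ← hcdef]
    field_simp
    linarith
  have hs : Real.sin (δ t / 2) = T * c := by
    rw [hTdef, Real.tan_eq_sin_div_cos, ← hcdef]
    field_simp
  have hN2 : N ^ 2 = 1 + 16 * k₂ ^ 2 * T ^ 2 := by
    rw [hNdef, NN, ← hTdef]
    exact Real.sq_sqrt (by positivity)
  have hNpos : 0 < N := by
    rw [hNdef, NN, ← hTdef]
    exact Real.sqrt_pos.mpr (by positivity)
  have hq : Real.sqrt (k₁ / k₃) ^ 2 = k₁ / k₃ := Real.sq_sqrt (by positivity)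
  -- closed-loop derivatives in simplified form
  have hδ' : HasDerivAt δ (k₁ * Real.cos g * Real.sin g) t := by
    have h := hδ t ht
    have he : vN k₁ (ρ t) (γ t) / ρ t * Real.sin (γ t)
        = k₁ * Real.cos g * Real.sin g := by
      rw [← hg]; simp only [vN]; field_simp
    rwa [he] at h
  have hγ' : HasDerivAt γ (-(omTildeN k₁ k₂ k₃ k₄ (δ t) g)) t := by
    have h := hγ t ht
    have he : vN k₁ (ρ t) (γ t) / ρ t * Real.sin (γ t)
        - omN k₁ k₂ k₃ k₄ (δ t) (γ t)
        = -(omTildeN k₁ k₂ k₃ k₄ (δ t) g) := by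
      rw [← hg]; simp only [vN, omN]
      rw [Real.sin_two_mul]
      field_simp
      ring
    rwa [he] at h
  -- derivative of tan(δ/2)
  have htan : HasDerivAt (fun s => Real.tan (δ s / 2))
      (1 / c ^ 2 * (k₁ * Real.cos g * Real.sin g / 2)) t := by
    have h1 : HasDerivAt (fun s => δ s / 2) (k₁ * Real.cos g * Real.sin g / 2) t :=
      hδ'.div_const 2
    have h2 : HasDerivAt Real.tan (1 / c ^ 2) (δ t / 2) := by
      rw [hcdef]
      exact Real.hasDerivAt_tan (by rw [← hcdef]; exact hcne)
    exact h2.comp t h1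
  have htansq := htan.pow 2
  have harc : HasDerivAt (fun s => Real.arctan (4 * k₂ * Real.tan (δ s / 2)))
      (1 / (1 + (4 * k₂ * T) ^ 2)
        * (4 * k₂ * (1 / c ^ 2 * (k₁ * Real.cos g * Real.sin g / 2)))) t := by
    have h1 := htan.const_mul (4 * k₂)
    have h2 : HasDerivAt Real.arctan (1 / (1 + (4 * k₂ * T) ^ 2))
        (4 * k₂ * Real.tan (δ t / 2)) := by
      rw [hTdef]; exact Real.hasDerivAt_arctan _
    exact h2.comp t h1
  have hzd : HasDerivAt (fun s => zN k₂ (δ s) (γ s))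
      (-(omTildeN k₁ k₂ k₃ k₄ (δ t) g) + 1 / 2 * (1 / (1 + (4 * k₂ * T) ^ 2)
        * (4 * k₂ * (1 / c ^ 2 * (k₁ * Real.cos g * Real.sin g / 2))))) t := by
    simp only [zN]
    exact hγ'.add (harc.const_mul (1 / 2))
  have hzsq := hzd.pow 2
  have hV := (htansq.const_mul (4 : ℝ)).add (hzsq.const_mul (Real.sqrt (k₁ / k₃) ^ 2))
  -- sin(2γ) identity
  have h2z : Real.arctan (4 * k₂ * T) = 2 * z - 2 * g := by
    rw [hzdef, zN, ← hTdef]; ring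
  have hψm : 2 * z * ψ = Real.sin (2 * z - 2 * g) + Real.sin (2 * g) := by
    rw [hψdef]
    by_cases h0 : z = 0
    · simp [psiN, h0]
    · rw [psiN, if_neg h0]; field_simp
  have hsarc : Real.sin (Real.arctan (4 * k₂ * T)) = 4 * k₂ * T / N := by
    rw [Real.sin_arctan]
    congr 1
    rw [hNdef, NN, ← hTdef]
    congr 1
    ring
  have hsin2 : Real.sin (2 * g) = 2 * z * ψ - 4 * k₂ * T / N := by
    rw [hψm, ← h2z, hsarc]; ring
  -- the key inequality on the closed-form derivative
  have key : 2 * k₁ * T * (1 + T ^ 2) * Real.sin (2 * g)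
        - 2 * (k₁ / k₃) * k₄ * z ^ 2
        - 2 * (k₁ / k₂) * ψ ^ 2 * N * (1 + T ^ 2) * z ^ 2
      ≤ -(6 * k₁ * k₂ / N) * (1 + T ^ 2) * T ^ 2
        - 2 * k₄ * Real.sqrt (k₁ / k₃) ^ 2 * z ^ 2 := by
    rw [hq, hsin2]
    have hdiff : (-(6 * k₁ * k₂ / N) * (1 + T ^ 2) * T ^ 2
          - 2 * k₄ * (k₁ / k₃) * z ^ 2)
        - (2 * k₁ * T * (1 + T ^ 2) * (2 * z * ψ - 4 * k₂ * T / N)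
          - 2 * (k₁ / k₃) * k₄ * z ^ 2
          - 2 * (k₁ / k₂) * ψ ^ 2 * N * (1 + T ^ 2) * z ^ 2)
        = 2 * k₁ * (1 + T ^ 2) * (k₂ * T - N * (z * ψ)) ^ 2 / (k₂ * N) := by
      field_simp
      ring
    have hnum : 0 ≤ 2 * k₁ * (1 + T ^ 2) * (k₂ * T - N * (z * ψ)) ^ 2 :=
      mul_nonneg (mul_nonneg (by linarith) h1T.le) (sq_nonneg _)
    have h0 : 0 ≤ 2 * k₁ * (1 + T ^ 2) * (k₂ * T - N * (z * ψ)) ^ 2 / (k₂ * N) :=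
      div_nonneg hnum (mul_pos hk₂ hNpos).le
    linarith
  refine ⟨_, hV, le_of_eq_of_le ?_ key⟩
  -- identify the composed derivative with the closed form
  rw [← hg, ← hzdef, ← hTdef]
  simp only [omTildeN]
  rw [← hzdef, ← hψdef, ← hNdef, ← hTdef, ← hcdef, hs]
  have hgs : k₁ * Real.cos g * Real.sin g = k₁ * Real.sin (2 * g) / 2 := by
    rw [Real.sin_two_mul]; ring
  rw [hgs]
  have hinv : 1 / c ^ 2 = 1 + T ^ 2 := by
    rw [div_eq_iff (by positivity : c ^ 2 ≠ 0)]
    linarith [hc2]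
  have hden1 : 1 + (4 * k₂ * T) ^ 2 = N ^ 2 := by rw [hN2]; ring
  have hden2 : c ^ 2 + 16 * k₂ ^ 2 * (T * c) ^ 2 = N ^ 2 / (1 + T ^ 2) := by
    rw [eq_div_iff h1T.ne']
    linear_combination (1 + 16 * k₂ ^ 2 * T ^ 2) * hc2 - hN2
  rw [hinv, hden1, hden2, hq]
  push_cast
  field_simp
  ring

end
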